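/- Let r ≥ 3, let ℓ ≥ 0, and let I = {i_1 < i_2 < ⋯ < i_ℓ} be a set of nonconsecutive integers with 1 < i_1 and i_ℓ < r (so i_{j+1} ≥ i_j + 2 for all j), and let c_{i_1},…,c_{i_ℓ} be positive integers. Let ξ ∈ ℕ^r be the vector whose i_j-th coordinate is 1 + c_{i_j} for each j and whose other coordinates are 1 (that is, ξ = Σ_{i=1}^r α_i + Σ_{j=1}^ℓ c_{i_j} α_{i_j}). Set m = Σ_{j=1}^ℓ c_{i_j}. Then, as polynomials in ℤ[q], Σ_{k≥0} N_k(ξ)·q^k = q^{m+1}·(1+q)^{r−1−2ℓ}·(2+2q+q²)^ℓ. -/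

import Mathlib

open Polynomial

/-- The positive roots of the Lie algebra of type `A_r` in simple-root coordinates:
the indicator vectors `α[i,j]` of the intervals `[i,j]` for `1 ≤ i ≤ j ≤ r`
(positions are `1`-based, so position `i` corresponds to `t : Fin r` with `t.val + 1 = i`). -/
def isPosRootA (r : ℕ) (v : Fin r → ℕ) : Prop :=
  ∃ i j : ℕ, 1 ≤ i ∧ i ≤ j ∧ j ≤ r ∧
    v = fun t => if i ≤ t.val + 1 ∧ t.val + 1 ≤ j then 1 else 0

/-- `NA r k ξ` is the number of decompositions of the weight `ξ` as a sum of exactly `k`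
positive roots of `A_r`, i.e. the number of `ℕ`-valued functions (with finite support)
on the set of positive roots whose values sum to `k` and whose weighted vector sum is `ξ`. -/
noncomputable def NA (r k : ℕ) (ξ : Fin r → ℕ) : ℕ :=
  Set.ncard {m : (Fin r → ℕ) →₀ ℕ |
    (∀ v ∈ m.support, isPosRootA r v) ∧
    (m.sum fun _ n => n) = k ∧
    (m.sum fun v n => n • v) = ξ}

namespace QA
open Finset
-- (pretend part1 is above; will concatenate later)

def b2 (x : Bool) : ℕ := if x then 1 else 0

@[simp] lemma b2_true : b2 true = 1 := rfl
@[simp] lemma b2_false : b2 false = 0 := rfl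
lemma b2_le_one (x : Bool) : b2 x ≤ 1 := by cases x <;> simp [b2]
lemma b2_eq_one {x : Bool} : b2 x = 1 ↔ x = true := by cases x <;> simp [b2]
lemma b2_eq_zero {x : Bool} : b2 x = 0 ↔ x = false := by cases x <;> simp [b2]

def xiN (I : Finset ℕ) (c : ℕ → ℕ) (t : ℕ) : ℕ := if t + 1 ∈ I then 1 + c (t + 1) else 1

def inflow (r : ℕ) (n : ℕ → ℕ → ℕ) (t : ℕ) : ℕ := ∑ a ∈ range t, ∑ b ∈ Ico t r, n a b
def pss (r : ℕ) (n : ℕ → ℕ → ℕ) (t : ℕ) : ℕ := ∑ a ∈ range t, ∑ b ∈ Ico (t + 1) r, n a b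
def cov (r : ℕ) (n : ℕ → ℕ → ℕ) (t : ℕ) : ℕ := ∑ a ∈ range (t + 1), ∑ b ∈ Ico t r, n a b
def total (r : ℕ) (n : ℕ → ℕ → ℕ) : ℕ := ∑ a ∈ range r, ∑ b ∈ range r, n a b

def Dcond (r : ℕ) (I : Finset ℕ) (c : ℕ → ℕ) (k : ℕ) (n : ℕ → ℕ → ℕ) : Prop :=
  (∀ a b, ¬(a ≤ b ∧ b < r) → n a b = 0) ∧ (∀ t, t < r → cov r n t = xiN I c t) ∧
    total r n = k

lemma sum_two_le {α : Type*} [DecidableEq α] {s : Finset α} {f : α → ℕ} {p q : α}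
    (hp : p ∈ s) (hq : q ∈ s) (hne : p ≠ q) (h1 : 1 ≤ f p) (h2 : 1 ≤ f q) :
    2 ≤ ∑ x ∈ s, f x := by
  have hsub : {p, q} ⊆ s := by intro x hx; simp at hx; rcases hx with h | h <;> simp [h, hp, hq]
  calc 2 ≤ ∑ x ∈ ({p, q} : Finset α), f x := by
        rw [Finset.sum_pair hne]; omega
    _ ≤ ∑ x ∈ s, f x := Finset.sum_le_sum_of_subset hsub

lemma master1 (r : ℕ) (n : ℕ → ℕ → ℕ) (t : ℕ) (ht : t < r) :
    cov r n t + pss r n t = n t t + inflow r n t + inflow r n (t + 1) := by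
  have hsplitb : ∀ a, ∑ b ∈ Ico t r, n a b = n a t + ∑ b ∈ Ico (t + 1) r, n a b := by
    intro a; exact Finset.sum_eq_sum_Ico_succ_bot ht _
  have hcov : cov r n t = (∑ a ∈ range t, n a t) + pss r n t
      + (n t t + ∑ b ∈ Ico (t + 1) r, n t b) := by
    rw [cov, Finset.sum_range_succ]
    simp only [hsplitb, Finset.sum_add_distrib, pss]
  have hin : inflow r n t = (∑ a ∈ range t, n a t) + pss r n t := by
    rw [inflow]; simp only [hsplitb, Finset.sum_add_distrib, pss]
  have hout : inflow r n (t + 1) = pss r n t + ∑ b ∈ Ico (t + 1) r, n t b := by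
    rw [inflow, Finset.sum_range_succ, pss]
  omega

lemma cov_split (r : ℕ) (n : ℕ → ℕ → ℕ) (t : ℕ) :
    cov r n t = inflow r n t + ∑ b ∈ Ico t r, n t b := by
  rw [cov, inflow, Finset.sum_range_succ]

lemma master2 (r : ℕ) (n : ℕ → ℕ → ℕ) (hsupp : ∀ a b, ¬(a ≤ b ∧ b < r) → n a b = 0) :
    ∑ t ∈ range r, cov r n t = (∑ t ∈ range r, inflow r n t) + total r n := by
  have hrow : ∀ a ∈ range r, ∑ b ∈ range r, n a b = ∑ b ∈ Ico a r, n a b := by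
    intro a _
    refine (Finset.sum_subset ?_ ?_).symm
    · intro b hb; simp only [Finset.mem_Ico] at hb; simp [Finset.mem_range, hb.2]
    · intro b hb hnb; simp only [Finset.mem_range] at hb; simp only [Finset.mem_Ico] at hnb
      exact hsupp a b (by omega)
  have : total r n = ∑ t ∈ range r, ∑ b ∈ Ico t r, n t b := Finset.sum_congr rfl hrow
  rw [this, ← Finset.sum_add_distrib]
  exact Finset.sum_congr rfl fun t _ => cov_split r n t

lemma pss_le_inflow (r : ℕ) (n : ℕ → ℕ → ℕ) (t : ℕ) : pss r n t ≤ inflow r n t :=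
  Finset.sum_le_sum fun a _ => Finset.sum_le_sum_of_subset (Finset.Ico_subset_Ico (by omega) le_rfl)

lemma pss_le_inflow_succ (r : ℕ) (n : ℕ → ℕ → ℕ) (t : ℕ) : pss r n t ≤ inflow r n (t + 1) :=
  Finset.sum_le_sum_of_subset (Finset.range_subset_range.2 (by omega))

lemma inflow_le_cov (r : ℕ) (n : ℕ → ℕ → ℕ) (t : ℕ) : inflow r n t ≤ cov r n t :=
  Finset.sum_le_sum_of_subset (Finset.range_subset_range.2 (by omega))

lemma inflow_succ_le_cov (r : ℕ) (n : ℕ → ℕ → ℕ) (t : ℕ) : inflow r n (t + 1) ≤ cov r n t :=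
  Finset.sum_le_sum fun a _ => Finset.sum_le_sum_of_subset (Finset.Ico_subset_Ico (by omega) le_rfl)

@[simp] lemma inflow_zero (r : ℕ) (n : ℕ → ℕ → ℕ) : inflow r n 0 = 0 := by simp [inflow]

lemma inflow_high (r : ℕ) (n : ℕ → ℕ → ℕ) (t : ℕ) (ht : r ≤ t) : inflow r n t = 0 := by
  rw [inflow]
  have : Ico t r = ∅ := Finset.Ico_eq_empty (by omega)
  simp [this]


/-! ## Generic double-sum helpers -/

lemma double_le {f : ℕ → ℕ → ℕ} {s t : Finset ℕ} {x y : ℕ} (hx : x ∈ s) (hy : y ∈ t) :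
    f x y ≤ ∑ a ∈ s, ∑ b ∈ t, f a b :=
  le_trans (Finset.single_le_sum (fun b _ => Nat.zero_le _) hy)
    (Finset.single_le_sum (fun a _ => Nat.zero_le (∑ b ∈ t, f a b)) hx)

lemma double_two_le {f : ℕ → ℕ → ℕ} {s t : Finset ℕ} {x y u v : ℕ}
    (hx : x ∈ s) (hy : y ∈ t) (hu : u ∈ s) (hv : v ∈ t) (hne : (x, y) ≠ (u, v))
    (h1 : 1 ≤ f x y) (h2 : 1 ≤ f u v) : 2 ≤ ∑ a ∈ s, ∑ b ∈ t, f a b := by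
  rw [← Finset.sum_product' s t f]
  exact sum_two_le (Finset.mk_mem_product hx hy) (Finset.mk_mem_product hu hv) hne h1 h2

lemma double_exists {f : ℕ → ℕ → ℕ} {s t : Finset ℕ}
    (h : ∑ a ∈ s, ∑ b ∈ t, f a b ≠ 0) : ∃ x ∈ s, ∃ y ∈ t, f x y ≠ 0 := by
  obtain ⟨x, hx, h2⟩ := Finset.exists_ne_zero_of_sum_ne_zero h
  obtain ⟨y, hy, h3⟩ := Finset.exists_ne_zero_of_sum_ne_zero h2
  exact ⟨x, hx, y, hy, h3⟩

/-! ## chain condition and canonical matrix -/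

def chainLP (L P : ℕ → Bool) (a b : ℕ) : Prop :=
  (∀ g ∈ Finset.Ioc a b, L g = true) ∧ P a = false ∧ P b = false ∧
    ∀ u ∈ Finset.Ioo a b, P u = true

instance chainLP.dec (L P : ℕ → Bool) (a b : ℕ) : Decidable (chainLP L P a b) := by
  unfold chainLP; infer_instance

def nMat (r : ℕ) (I : Finset ℕ) (c : ℕ → ℕ) (L P : ℕ → Bool) (a b : ℕ) : ℕ :=
  if a = b ∧ a < r then xiN I c a + b2 (P a) - b2 (L a) - b2 (L (a + 1))
  else if a < b ∧ b < r ∧ chainLP L P a b then 1 else 0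

structure LPgood (r : ℕ) (I : Finset ℕ) (L P : ℕ → Bool) : Prop where
  L0 : L 0 = false
  Lhigh : ∀ t, r ≤ t → L t = false
  hP1 : ∀ t, P t = true → L t = true ∧ L (t + 1) = true
  hP2 : ∀ t, t + 1 ∉ I → L t = true → L (t + 1) = true → P t = true

def rootv (r a b : ℕ) : Fin r → ℕ := fun t => if a ≤ t.val ∧ t.val ≤ b then 1 else 0

noncomputable def toFs (r : ℕ) (n : ℕ → ℕ → ℕ) : (Fin r → ℕ) →₀ ℕ :=
  ∑ p ∈ range r ×ˢ range r, Finsupp.single (rootv r p.1 p.2) (n p.1 p.2)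

section Main

variable {r : ℕ} {I : Finset ℕ} {c : ℕ → ℕ} {k : ℕ}
variable (hI : ∀ i ∈ I, 1 < i ∧ i < r)
variable (hnc : ∀ i ∈ I, ∀ j ∈ I, i < j → i + 2 ≤ j)
variable (hc : ∀ i ∈ I, 1 ≤ c i)

lemma xi_pos (t : ℕ) : 1 ≤ xiN I c t := by unfold xiN; split <;> omega

include hc in
lemma xi_ge_two {t : ℕ} (ht : t + 1 ∈ I) : 2 ≤ xiN I c t := by
  unfold xiN; rw [if_pos ht]; have := hc _ ht; omega

lemma xi_eq_one {t : ℕ} (ht : t + 1 ∉ I) : xiN I c t = 1 := by unfold xiN; rw [if_neg ht]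

include hnc in
lemma not_both_mem {t : ℕ} : ¬(t ∈ I ∧ t + 1 ∈ I) := by
  rintro ⟨h1, h2⟩
  have := hnc t h1 (t + 1) h2 (by omega)
  omega

/-! ## Analysis of a decomposition -/

variable {n : ℕ → ℕ → ℕ} (hD : Dcond r I c k n)

include hD hnc in
lemma inflow_le_one (t : ℕ) : inflow r n t ≤ 1 := by
  rcases Nat.eq_zero_or_pos t with h | h
  · subst h; simp
  rcases Nat.lt_or_ge t r with h2 | h2
  · obtain ⟨s, rfl⟩ : ∃ s, t = s + 1 := ⟨t - 1, by omega⟩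
    have c1 : inflow r n (s + 1) ≤ xiN I c s := by
      have := inflow_succ_le_cov r n s
      rwa [hD.2.1 s (by omega)] at this
    have c2 : inflow r n (s + 1) ≤ xiN I c (s + 1) := by
      have := inflow_le_cov r n (s + 1)
      rwa [hD.2.1 (s + 1) h2] at this
    have := not_both_mem hnc (t := s + 1)
    unfold xiN at c1 c2
    by_cases hs : s + 1 ∈ I
    · have : s + 1 + 1 ∉ I := fun hh => this ⟨hs, hh⟩
      rw [if_neg this] at c2; omega
    · rw [if_neg hs] at c1; omega
  · rw [inflow_high r n t h2]; omega

include hD hnc in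
lemma pss_le_one (t : ℕ) : pss r n t ≤ 1 :=
  le_trans (pss_le_inflow r n t) (inflow_le_one hnc hD t)

def LnOf (r : ℕ) (n : ℕ → ℕ → ℕ) (t : ℕ) : Bool := decide (inflow r n t = 1)
def PnOf (r : ℕ) (n : ℕ → ℕ → ℕ) (t : ℕ) : Bool := decide (pss r n t = 1)

include hD hnc in
lemma b2_LnOf (t : ℕ) : b2 (LnOf r n t) = inflow r n t := by
  have := inflow_le_one hnc hD t
  unfold LnOf b2
  interval_cases h : inflow r n t <;> simp

include hD hnc in
lemma b2_PnOf (t : ℕ) : b2 (PnOf r n t) = pss r n t := by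
  have := pss_le_one hnc hD t
  unfold PnOf b2
  interval_cases h : pss r n t <;> simp

include hD hnc hc in
lemma LPgood_of (hr : 3 ≤ r) : LPgood r I (LnOf r n) (PnOf r n) := by
  constructor
  · simp [LnOf]
  · intro t ht; simp [LnOf, inflow_high r n t ht]
  · intro t hP
    have hp : pss r n t = 1 := by simpa [PnOf] using hP
    have h1 : 1 ≤ inflow r n t := hp ▸ pss_le_inflow r n t
    have h2 : 1 ≤ inflow r n (t + 1) := hp ▸ pss_le_inflow_succ r n t
    have g1 := inflow_le_one hnc hD t
    have g2 := inflow_le_one hnc hD (t + 1)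
    constructor <;> simp [LnOf] <;> omega
  · intro t htI hL1 hL2
    have h1 : inflow r n t = 1 := by simpa [LnOf] using hL1
    have h2 : inflow r n (t + 1) = 1 := by simpa [LnOf] using hL2
    have htr : t < r := by
      by_contra hh
      rw [inflow_high r n t (by omega)] at h1; omega
    have hm := master1 r n t htr
    rw [hD.2.1 t htr, xi_eq_one htI, h1, h2] at hm
    have := pss_le_one hnc hD t
    simp only [PnOf, decide_eq_true_eq]
    omega

include hD hnc in
lemma chain_of_one {a b : ℕ} (hab : a < b) (hbr : b < r) (h1 : 1 ≤ n a b) :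
    chainLP (LnOf r n) (PnOf r n) a b := by
  have hLin : ∀ g ∈ Finset.Ioc a b, LnOf r n g = true := by
    intro g hg
    rw [Finset.mem_Ioc] at hg
    have : 1 ≤ inflow r n g :=
      le_trans h1 (double_le (by simp [Finset.mem_range]; omega) (by simp [Finset.mem_Ico]; omega))
    have := inflow_le_one hnc hD g
    simp [LnOf]; omega
  refine ⟨hLin, ?_, ?_, ?_⟩
  · -- P a = false
    by_contra hPa
    have hp : pss r n a = 1 := by
      simpa [PnOf] using (Bool.not_eq_false _).mp hPa
    obtain ⟨x, hx, y, hy, hxy⟩ := double_exists (f := n) (s := range a) (t := Ico (a + 1) r)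
      (by rw [← pss, hp]; omega)
    rw [Finset.mem_range] at hx; rw [Finset.mem_Ico] at hy
    have h2 : 2 ≤ inflow r n (a + 1) := by
      rw [inflow]
      refine double_two_le (x := x) (y := y) (u := a) (v := b) ?_ ?_ ?_ ?_ ?_ (by omega) h1
      · simp [Finset.mem_range]; omega
      · simp [Finset.mem_Ico]; omega
      · simp [Finset.mem_range]
      · simp [Finset.mem_Ico]; omega
      · simp; omega
    have := inflow_le_one hnc hD (a + 1)
    omega
  · -- P b = false
    by_contra hPb
    have hp : pss r n b = 1 := by
      simpa [PnOf] using (Bool.not_eq_false _).mp hPb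
    obtain ⟨x, hx, y, hy, hxy⟩ := double_exists (f := n) (s := range b) (t := Ico (b + 1) r)
      (by rw [← pss, hp]; omega)
    rw [Finset.mem_range] at hx; rw [Finset.mem_Ico] at hy
    have h2 : 2 ≤ inflow r n b := by
      rw [inflow]
      refine double_two_le (x := x) (y := y) (u := a) (v := b) ?_ ?_ ?_ ?_ ?_ (by omega) h1
      · simp [Finset.mem_range]; omega
      · simp [Finset.mem_Ico]; omega
      · simp [Finset.mem_range]; omega
      · simp [Finset.mem_Ico]; omega
      · simp; omega
    have := inflow_le_one hnc hD b
    omega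
  · intro u hu
    rw [Finset.mem_Ioo] at hu
    have h2 : 1 ≤ pss r n u :=
      le_trans h1 (double_le (by simp [Finset.mem_range]; omega) (by simp [Finset.mem_Ico]; omega))
    have := pss_le_one hnc hD u
    simp [PnOf]; omega

include hD hnc in
lemma n_le_one {a b : ℕ} (hab : a < b) (hbr : b < r) : n a b ≤ 1 := by
  have h := double_le (f := n) (s := range (a + 1)) (t := Ico (a + 1) r)
    (x := a) (y := b) (by simp) (by simp [Finset.mem_Ico]; omega)
  rw [← inflow] at h
  exact le_trans h (inflow_le_one hnc hD (a + 1))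

include hD hnc in
lemma one_of_chain {a b : ℕ} (hab : a < b) (hbr : b < r)
    (hch : chainLP (LnOf r n) (PnOf r n) a b) : n a b = 1 := by
  obtain ⟨hL, hPa, hPb, hPint⟩ := hch
  have hLa1 : inflow r n (a + 1) = 1 := by
    have := hL (a + 1) (by rw [Finset.mem_Ioc]; omega)
    simpa [LnOf] using this
  obtain ⟨x, hx, y, hy, hxy⟩ := double_exists (f := n)
    (s := range (a + 1)) (t := Ico (a + 1) r) (by rw [← inflow, hLa1]; omega)
  rw [Finset.mem_range] at hx; rw [Finset.mem_Ico] at hy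
  have hxa : x = a := by
    by_contra hne
    have hxa' : x < a := by omega
    have : 1 ≤ pss r n a := by
      rw [pss]
      exact le_trans (by omega : 1 ≤ n x y)
        (double_le (by simp [Finset.mem_range]; omega) (by simp [Finset.mem_Ico]; omega))
    have h2 := pss_le_one hnc hD a
    have : PnOf r n a = true := by simp [PnOf]; omega
    rw [this] at hPa; exact Bool.noConfusion hPa
  subst hxa
  have hyb : y = b := by
    rcases lt_trichotomy y b with hlt | heq | hgt
    · exfalso
      have hPu : PnOf r n y = true := hPint y (by rw [Finset.mem_Ioo]; omega)
      have hpy : pss r n y = 1 := by simpa [PnOf] using hPu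
      obtain ⟨u, hu, v, hv, huv⟩ := double_exists (f := n)
        (s := range y) (t := Ico (y + 1) r) (by rw [← pss, hpy]; omega)
      rw [Finset.mem_range] at hu; rw [Finset.mem_Ico] at hv
      have h2 : 2 ≤ inflow r n y := by
        refine double_two_le (x := u) (y := v) (u := x) (v := y) ?_ ?_ ?_ ?_ ?_ (by omega) (by omega)
        · simp [Finset.mem_range]; omega
        · simp [Finset.mem_Ico]; omega
        · simp [Finset.mem_range]; omega
        · simp [Finset.mem_Ico]; omega
        · simp; omega
      have h3 : inflow r n y = 1 := by
        have := hL y (by rw [Finset.mem_Ioc]; omega)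
        simpa [LnOf] using this
      omega
    · exact heq
    · exfalso
      have : 1 ≤ pss r n b :=
        le_trans (by omega : 1 ≤ n x y) (double_le (by simp [Finset.mem_range]; omega) (by simp [Finset.mem_Ico]; omega))
      have h2 := pss_le_one hnc hD b
      have : PnOf r n b = true := by simp [PnOf]; omega
      rw [this] at hPb; exact Bool.noConfusion hPb
  subst hyb
  have := n_le_one hnc hD hab hbr
  omega

include hD hnc in
lemma recon : nMat r I c (LnOf r n) (PnOf r n) = n := by
  funext a b
  unfold nMat
  by_cases h1 : a = b ∧ a < r
  · obtain ⟨rfl, har⟩ := h1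
    rw [if_pos ⟨rfl, har⟩]
    have hm := master1 r n a har
    rw [hD.2.1 a har] at hm
    rw [b2_LnOf hnc hD, b2_LnOf hnc hD, b2_PnOf hnc hD]
    omega
  · rw [if_neg h1]
    by_cases h2 : a < b ∧ b < r ∧ chainLP (LnOf r n) (PnOf r n) a b
    · rw [if_pos h2]
      exact (one_of_chain hnc hD h2.1 h2.2.1 h2.2.2).symm
    · rw [if_neg h2]
      by_cases h3 : a ≤ b ∧ b < r
      · have hab : a < b := by rcases h3 with ⟨h3a, h3b⟩; rcases Nat.eq_or_lt_of_le h3a with rfl | h; exacts [absurd ⟨rfl, h3b⟩ h1, h]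
        by_contra hne
        have : 1 ≤ n a b := by omega
        exact h2 ⟨hab, h3.2, chain_of_one hnc hD hab h3.2 this⟩
      · exact (hD.1 a b h3).symm


/-! ## Construction from (L, P) data -/

variable {L P : ℕ → Bool}

lemma nMat_supp (a b : ℕ) (h : ¬(a ≤ b ∧ b < r)) : nMat r I c L P a b = 0 := by
  unfold nMat
  rw [if_neg (by omega), if_neg (by omega)]

include hc in
lemma diag_bound (hLP : LPgood r I L P) (t : ℕ) :
    b2 (L t) + b2 (L (t + 1)) ≤ xiN I c t + b2 (P t) := by
  have h1 := xi_pos (I := I) (c := c) t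
  have h2 := b2_le_one (L (t + 1))
  have h4 := b2_le_one (P t)
  rcases hLt : L t with _ | _
  · simp only [b2_false]; omega
  rcases hLt1 : L (t + 1) with _ | _
  · simp only [b2_true, b2_false]; omega
  by_cases hI1 : t + 1 ∈ I
  · have := xi_ge_two hc hI1; simp only [b2_true]; omega
  · rw [hLP.hP2 t hI1 hLt hLt1]; simp only [b2_true]; omega

include hc in
lemma nMat_diag (hLP : LPgood r I L P) (t : ℕ) (ht : t < r) :
    nMat r I c L P t t + (b2 (L t) + b2 (L (t + 1))) = xiN I c t + b2 (P t) := by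
  unfold nMat
  rw [if_pos ⟨rfl, ht⟩]
  have := diag_bound hc hLP t
  omega

lemma chain_unique (hch : chainLP L P a b) (hch' : chainLP L P a' b') {t : ℕ}
    (h1 : a < t) (h2 : t ≤ b) (h3 : a' < t) (h4 : t ≤ b') : a = a' ∧ b = b' := by
  constructor
  · by_contra hne
    rcases Nat.lt_or_ge a a' with h | h
    · have : P a' = true := hch.2.2.2 a' (by rw [Finset.mem_Ioo]; omega)
      rw [hch'.2.1] at this; exact Bool.noConfusion this
    · have ha : a' < a := by omega
      have : P a = true := hch'.2.2.2 a (by rw [Finset.mem_Ioo]; omega)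
      rw [hch.2.1] at this; exact Bool.noConfusion this
  · by_contra hne
    rcases Nat.lt_or_ge b b' with h | h
    · have : P b = true := hch'.2.2.2 b (by rw [Finset.mem_Ioo]; omega)
      rw [hch.2.2.1] at this; exact Bool.noConfusion this
    · have hb : b' < b := by omega
      have : P b' = true := hch.2.2.2 b' (by rw [Finset.mem_Ioo]; omega)
      rw [hch'.2.2.1] at this; exact Bool.noConfusion this

lemma chain_exists (hLP : LPgood r I L P) {t : ℕ} (hLt : L t = true) :
    ∃ a b, a < t ∧ t ≤ b ∧ b < r ∧ chainLP L P a b := by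
  have ht1 : 1 ≤ t := by
    rcases Nat.eq_zero_or_pos t with rfl | h
    · rw [hLP.L0] at hLt; exact Bool.noConfusion hLt
    · exact h
  have htr : t < r := by
    by_contra h
    rw [hLP.Lhigh t (by omega)] at hLt; exact Bool.noConfusion hLt
  have hPfalse_of_Lfalse : ∀ x, L x = false → P x = false := by
    intro x hx
    rcases hPx : P x with _ | _
    · rfl
    · rw [(hLP.hP1 x hPx).1] at hx; exact Bool.noConfusion hx
  -- left endpoint
  have hex : ∃ x, x ≤ t - 1 ∧ (P x = false ∧ ∀ g ∈ Finset.Ioc x t, L g = true) := by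
    by_cases hall : ∀ g ∈ Finset.Ioc 0 t, L g = true
    · exact ⟨0, by omega, hPfalse_of_Lfalse 0 hLP.L0, hall⟩
    · push_neg at hall
      obtain ⟨g, hg, hgL⟩ := hall
      rw [Finset.mem_Ioc] at hg
      have hgL : L g = false := by rcases h : L g with _ | _; rfl; exact absurd h hgL
      have hQg0 : 0 < Nat.findGreatest (fun x => 0 < x ∧ L x = false) t ∧
          L (Nat.findGreatest (fun x => 0 < x ∧ L x = false) t) = false :=
        Nat.findGreatest_spec (P := fun x => 0 < x ∧ L x = false) (n := t) (m := g) (by omega) ⟨hg.1, hgL⟩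
      set g0 := Nat.findGreatest (fun x => 0 < x ∧ L x = false) t with hg0def
      have hg0le : g0 ≤ t := Nat.findGreatest_le t
      have hg0ne : g0 ≠ t := by
        intro h
        have h2 : L g0 = false := hQg0.2
        rw [h, hLt] at h2
        exact Bool.noConfusion h2
      refine ⟨g0, by omega, hPfalse_of_Lfalse g0 hQg0.2, ?_⟩
      intro u hu
      rw [Finset.mem_Ioc] at hu
      by_contra hLu
      have hLu : L u = false := by rcases h : L u with _ | _; rfl; exact absurd h hLu
      exact Nat.findGreatest_is_greatest (P := fun x => 0 < x ∧ L x = false) (n := t) (by omega) (by omega) ⟨by omega, hLu⟩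
  obtain ⟨x0, hx0le, hAx0⟩ := hex
  have hAa : P (Nat.findGreatest (fun x => P x = false ∧ ∀ g ∈ Finset.Ioc x t, L g = true) (t - 1)) = false ∧
      ∀ g ∈ Finset.Ioc (Nat.findGreatest (fun x => P x = false ∧ ∀ g ∈ Finset.Ioc x t, L g = true) (t - 1)) t, L g = true :=
    Nat.findGreatest_spec (P := fun x => P x = false ∧ ∀ g ∈ Finset.Ioc x t, L g = true) hx0le hAx0
  set a := Nat.findGreatest (fun x => P x = false ∧ ∀ g ∈ Finset.Ioc x t, L g = true) (t - 1) with hadef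
  have halt : a < t := by
    have := Nat.findGreatest_le (P := fun x => P x = false ∧ ∀ g ∈ Finset.Ioc x t, L g = true) (t - 1)
    omega
  -- right endpoint
  have hCex : ∃ y, t ≤ y ∧ L (y + 1) = false := ⟨r - 1, by omega, hLP.Lhigh _ (by omega)⟩
  have hCy1 : t ≤ Nat.find hCex ∧ L (Nat.find hCex + 1) = false := Nat.find_spec hCex
  set y1 := Nat.find hCex with hy1def
  have hy1le : y1 ≤ r - 1 := Nat.find_min' hCex (show t ≤ r - 1 ∧ L (r - 1 + 1) = false from ⟨by omega, hLP.Lhigh _ (by omega)⟩)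
  have hBy1 : t ≤ y1 ∧ P y1 = false ∧ ∀ g ∈ Finset.Ioc t y1, L g = true := by
    refine ⟨hCy1.1, ?_, ?_⟩
    · rcases hP : P y1 with _ | _
      · rfl
      · have := (hLP.hP1 y1 hP).2
        rw [hCy1.2] at this; exact Bool.noConfusion this
    · intro g hg
      rw [Finset.mem_Ioc] at hg
      by_contra hLg
      have hLg : L g = false := by rcases h : L g with _ | _; rfl; exact absurd h hLg
      have hnc1 : ¬ (t ≤ g - 1 ∧ L (g - 1 + 1) = false) := Nat.find_min hCex (by omega)
      push_neg at hnc1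
      have h2 := hnc1 (by omega)
      rw [Nat.sub_add_cancel (by omega), hLg] at h2
      exact h2 rfl
  have hBex : ∃ y, t ≤ y ∧ P y = false ∧ ∀ g ∈ Finset.Ioc t y, L g = true := ⟨y1, hBy1⟩
  have hBb : t ≤ Nat.find hBex ∧ P (Nat.find hBex) = false ∧
      ∀ g ∈ Finset.Ioc t (Nat.find hBex), L g = true := Nat.find_spec hBex
  set b := Nat.find hBex with hbdef
  have hble : b ≤ y1 := Nat.find_min' hBex hBy1
  refine ⟨a, b, halt, hBb.1, by omega, ?_, hAa.1, hBb.2.1, ?_⟩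
  · intro g hg
    rw [Finset.mem_Ioc] at hg
    by_cases hgt : g ≤ t
    · exact hAa.2 g (by rw [Finset.mem_Ioc]; omega)
    · exact hBb.2.2 g (by rw [Finset.mem_Ioc]; omega)
  · intro u hu
    rw [Finset.mem_Ioo] at hu
    by_contra hPu
    have hPu : P u = false := by rcases h : P u with _ | _; rfl; exact absurd h hPu
    rcases lt_trichotomy u t with hut | rfl | hut
    · have hAu : P u = false ∧ ∀ g ∈ Finset.Ioc u t, L g = true := ⟨hPu, fun g hg => by
        rw [Finset.mem_Ioc] at hg
        exact hAa.2 g (by rw [Finset.mem_Ioc]; omega)⟩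
      exact Nat.findGreatest_is_greatest (P := fun x => P x = false ∧ ∀ g ∈ Finset.Ioc x t, L g = true) (n := t - 1) (by omega) (by omega) hAu
    · have hBt : u ≤ u ∧ P u = false ∧ ∀ g ∈ Finset.Ioc u u, L g = true := ⟨le_rfl, hPu, by simp⟩
      have := Nat.find_min' hBex hBt
      omega
    · have hBu : t ≤ u ∧ P u = false ∧ ∀ g ∈ Finset.Ioc t u, L g = true := ⟨by omega, hPu, fun g hg => by
        rw [Finset.mem_Ioc] at hg
        exact hBb.2.2 g (by rw [Finset.mem_Ioc]; omega)⟩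
      have := Nat.find_min' hBex hBu
      omega

lemma nMat_offdiag {a b : ℕ} (hne : a ≠ b) :
    nMat r I c L P a b = if a < b ∧ b < r ∧ chainLP L P a b then 1 else 0 := by
  unfold nMat
  rw [if_neg (fun h => hne h.1)]

lemma inflow_nMat (hLP : LPgood r I L P) (t : ℕ) :
    inflow r (nMat r I c L P) t = b2 (L t) := by
  rw [inflow, ← Finset.sum_product']
  rcases hLt : L t with _ | _
  · rw [b2_false]
    apply Finset.sum_eq_zero
    rintro ⟨a, b⟩ hp
    rw [Finset.mem_product, Finset.mem_range, Finset.mem_Ico] at hp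
    rw [nMat_offdiag (by omega), if_neg]
    rintro ⟨h1, h2, hch⟩
    have := hch.1 t (by rw [Finset.mem_Ioc]; omega)
    rw [hLt] at this; exact Bool.noConfusion this
  · rw [b2_true]
    obtain ⟨a0, b0, h1, h2, h3, hch⟩ := chain_exists hLP hLt
    rw [Finset.sum_eq_single_of_mem (a0, b0)
      (by rw [Finset.mem_product, Finset.mem_range, Finset.mem_Ico]; exact ⟨h1, h2, h3⟩)]
    · rw [nMat_offdiag (by omega), if_pos ⟨by omega, h3, hch⟩]
    · rintro ⟨a, b⟩ hp hne
      rw [Finset.mem_product, Finset.mem_range, Finset.mem_Ico] at hp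
      rw [nMat_offdiag (by omega), if_neg]
      rintro ⟨g1, g2, hch'⟩
      obtain ⟨e1, e2⟩ := chain_unique hch' hch (t := t) hp.1 hp.2.1 h1 h2
      exact hne (by rw [Prod.mk.injEq]; exact ⟨e1, e2⟩)

lemma pss_nMat (hLP : LPgood r I L P) (t : ℕ) :
    pss r (nMat r I c L P) t = b2 (P t) := by
  rcases hPt : P t with _ | _
  · rw [b2_false, pss]
    apply Finset.sum_eq_zero; intro a ha
    apply Finset.sum_eq_zero; intro b hb
    rw [Finset.mem_range] at ha; rw [Finset.mem_Ico] at hb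
    rw [nMat_offdiag (by omega), if_neg]
    rintro ⟨h1, h2, hch⟩
    have := hch.2.2.2 t (by rw [Finset.mem_Ioo]; omega)
    rw [hPt] at this; exact Bool.noConfusion this
  · rw [b2_true]
    obtain ⟨hL1, hL2⟩ := hLP.hP1 t hPt
    obtain ⟨a0, b0, h1, h2, h3, hch⟩ := chain_exists hLP hL1
    have hb0 : t + 1 ≤ b0 := by
      rcases Nat.eq_or_lt_of_le h2 with rfl | h
      · have h5 := hch.2.2.1
        rw [hPt] at h5; exact Bool.noConfusion h5
      · omega
    have hge : 1 ≤ pss r (nMat r I c L P) t := by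
      rw [pss]
      refine le_trans ?_ (double_le (f := nMat r I c L P) (x := a0) (y := b0)
        (by simp [Finset.mem_range]; omega) (by simp [Finset.mem_Ico]; omega))
      rw [nMat_offdiag (by omega), if_pos ⟨by omega, h3, hch⟩]
    have hle : pss r (nMat r I c L P) t ≤ inflow r (nMat r I c L P) t :=
      pss_le_inflow _ _ t
    rw [inflow_nMat hLP t, hL1, b2_true] at hle
    omega

include hc in
lemma cov_nMat (hLP : LPgood r I L P) (t : ℕ) (ht : t < r) :
    cov r (nMat r I c L P) t = xiN I c t := by
  have hm := master1 r (nMat r I c L P) t ht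
  rw [inflow_nMat hLP, inflow_nMat hLP, pss_nMat hLP] at hm
  have hd := nMat_diag hc hLP t ht
  omega

lemma total_eq {n : ℕ → ℕ → ℕ} (hsupp : ∀ a b, ¬(a ≤ b ∧ b < r) → n a b = 0)
    (hcov : ∀ t, t < r → cov r n t = xiN I c t) :
    total r n + ∑ t ∈ range r, inflow r n t = ∑ t ∈ range r, xiN I c t := by
  have h1 := master2 r n hsupp
  have h2 : ∑ t ∈ range r, cov r n t = ∑ t ∈ range r, xiN I c t :=
    Finset.sum_congr rfl fun t ht => hcov t (Finset.mem_range.mp ht)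
  omega

include hc in
lemma total_nMat (hLP : LPgood r I L P) :
    total r (nMat r I c L P) + ∑ t ∈ range r, b2 (L t) = ∑ t ∈ range r, xiN I c t := by
  have h1 := total_eq (n := nMat r I c L P) (nMat_supp) (cov_nMat hc hLP)
  have h2 : ∑ t ∈ range r, inflow r (nMat r I c L P) t = ∑ t ∈ range r, b2 (L t) :=
    Finset.sum_congr rfl fun t _ => inflow_nMat hLP t
  omega

include hI in
lemma sum_xi : ∑ t ∈ range r, xiN I c t = r + ∑ i ∈ I, c i := by
  unfold xiN
  have hpt : ∀ t, (if t + 1 ∈ I then 1 + c (t + 1) else 1)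
      = 1 + (if t + 1 ∈ I then c (t + 1) else 0) := by
    intro t; split <;> simp
  simp only [hpt]
  rw [Finset.sum_add_distrib, Finset.sum_const, card_range, smul_eq_mul, mul_one]
  congr 1
  rw [← Finset.sum_filter]
  refine Finset.sum_nbij' (fun t => t + 1) (fun i => i - 1) ?_ ?_ ?_ ?_ ?_
  · intro t ht
    simp only [Finset.mem_filter, Finset.mem_range] at ht
    exact ht.2
  · intro i hi
    have := hI i hi
    simp only [Finset.mem_filter, Finset.mem_range]
    constructor
    · omega
    · rw [Nat.sub_add_cancel (by omega)]; exact hi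
  · intro t ht; omega
  · intro i hi
    have := hI i hi; omega
  · intro t ht; rfl



/-! ## Boolean encoding -/

def xg (r : ℕ) (x : Fin r → Bool × Bool × Bool) (t : ℕ) : Bool × Bool × Bool :=
  if h : t < r then x ⟨t, h⟩ else (false, false, false)

def Aset (I : Finset ℕ) (t : ℕ) : Finset (Bool × Bool × Bool) :=
  if t + 1 ∈ I then Finset.univ.filter (fun v => v.2.2 = true → v.1 = true ∧ v.2.1 = true)
  else if t = 0 ∨ t ∈ I then {(false, false, false)}
  else Finset.univ.filter (fun v => v.2 = (false, false))

def wt (I : Finset ℕ) (t : ℕ) (v : Bool × Bool × Bool) : ℕ :=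
  if t + 1 ∈ I then (1 - b2 v.1) + (1 - b2 v.2.1)
  else if t = 0 ∨ t ∈ I then 0
  else 1 - b2 v.1

def LofX (r : ℕ) (I : Finset ℕ) (x : Fin r → Bool × Bool × Bool) (t : ℕ) : Bool :=
  if 0 < t ∧ t < r then (if t ∈ I then (xg r x (t - 1)).2.1 else (xg r x t).1) else false

def PofX (r : ℕ) (I : Finset ℕ) (x : Fin r → Bool × Bool × Bool) (t : ℕ) : Bool :=
  if t < r ∧ t + 1 ∈ I then (xg r x t).2.2 else (LofX r I x t && LofX r I x (t + 1))

def Wgt (r : ℕ) (I : Finset ℕ) (x : Fin r → Bool × Bool × Bool) : ℕ :=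
  ∑ t ∈ range r, wt I t (xg r x t)

def encodeX (r : ℕ) (I : Finset ℕ) (n : ℕ → ℕ → ℕ) : Fin r → Bool × Bool × Bool :=
  fun t => if t.val + 1 ∈ I then (LnOf r n t.val, LnOf r n (t.val + 1), PnOf r n t.val)
    else if t.val = 0 ∨ t.val ∈ I then (false, false, false)
    else (LnOf r n t.val, false, false)

def decodeN (r : ℕ) (I : Finset ℕ) (c : ℕ → ℕ) (x : Fin r → Bool × Bool × Bool) : ℕ → ℕ → ℕ :=
  nMat r I c (LofX r I x) (PofX r I x)

lemma xg_val {x : Fin r → Bool × Bool × Bool} {t : ℕ} (h : t < r) : xg r x t = x ⟨t, h⟩ :=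
  dif_pos h

include hI hnc in
lemma goodX {x : Fin r → Bool × Bool × Bool} (hx : ∀ t : Fin r, x t ∈ Aset I t.val) :
    LPgood r I (LofX r I x) (PofX r I x) := by
  have hLV : ∀ t, t + 1 ∈ I → LofX r I x t = (xg r x t).1 := by
    intro t ht
    have h1 := hI (t + 1) ht
    have h2 : t ∉ I := fun h => not_both_mem hnc ⟨h, ht⟩
    rw [LofX, if_pos (by omega), if_neg h2]
  have hLI : ∀ t, t ∈ I → LofX r I x t = (xg r x (t - 1)).2.1 := by
    intro t ht
    have h1 := hI t ht
    rw [LofX, if_pos (by omega), if_pos ht]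
  constructor
  · rw [LofX]; simp
  · intro t ht; rw [LofX, if_neg (by omega)]
  · intro t hPt
    rw [PofX] at hPt
    by_cases hsp : t < r ∧ t + 1 ∈ I
    · rw [if_pos hsp] at hPt
      have hmem := hx ⟨t, hsp.1⟩
      rw [Aset, if_pos hsp.2, Finset.mem_filter] at hmem
      rw [xg_val hsp.1] at hPt
      have himp := hmem.2 hPt
      rw [hLV t hsp.2, xg_val hsp.1, himp.1]
      have h1 := hI (t + 1) hsp.2
      rw [hLI (t + 1) hsp.2]
      have : t + 1 - 1 = t := by omega
      rw [this, xg_val hsp.1, himp.2]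
      exact ⟨rfl, rfl⟩
    · rw [if_neg hsp] at hPt
      exact Bool.and_eq_true_iff.mp hPt
  · intro t htI hL1 hL2
    rw [PofX, if_neg (by tauto), hL1, hL2]
    rfl

include hnc in
lemma LnOf_eq_LofX_encode (hD : Dcond r I c k n) :
    LofX r I (encodeX r I n) = LnOf r n := by
  funext t
  by_cases hg : 0 < t ∧ t < r
  · rw [LofX, if_pos hg]
    by_cases htI : t ∈ I
    · rw [if_pos htI, xg_val (show t - 1 < r by omega), encodeX]
      have : (⟨t - 1, by omega⟩ : Fin r).val + 1 ∈ I := by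
        simp only []
        have : t - 1 + 1 = t := by omega
        rw [this]; exact htI
      rw [if_pos this]
      simp only []
      congr 1
      omega
    · rw [if_neg htI, xg_val hg.2, encodeX]
      by_cases hV : (⟨t, hg.2⟩ : Fin r).val + 1 ∈ I
      · rw [if_pos hV]
      · rw [if_neg hV]
        have hne : ¬((⟨t, hg.2⟩ : Fin r).val = 0 ∨ (⟨t, hg.2⟩ : Fin r).val ∈ I) := by
          simp only [Fin.val_mk]
          rintro (h0 | hmem)
          · omega
          · exact htI hmem
        rw [if_neg hne]
  · rw [LofX, if_neg hg]
    rcases Nat.lt_or_ge t r with h | h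
    · have ht0 : t = 0 := by
        by_contra h0
        exact hg ⟨by omega, h⟩
      subst ht0
      simp [LnOf]
    · rw [LnOf, inflow_high r n t h]
      simp

include hnc in
lemma PnOf_eq_PofX_encode (hr : 3 ≤ r) (hD : Dcond r I c k n) (hcc : ∀ i ∈ I, 1 ≤ c i) :
    PofX r I (encodeX r I n) = PnOf r n := by
  have hL := LnOf_eq_LofX_encode hnc hD
  have hgood := LPgood_of hnc hcc hD hr
  funext t
  rw [PofX, hL]
  by_cases hsp : t < r ∧ t + 1 ∈ I
  · rw [if_pos hsp, xg_val hsp.1, encodeX, if_pos hsp.2]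
  · rw [if_neg hsp]
    rcases hP : PnOf r n t with _ | _
    · rcases hL1 : LnOf r n t with _ | _
      · rfl
      rcases hL2 : LnOf r n (t + 1) with _ | _
      · rfl
      · exfalso
        rcases Nat.lt_or_ge t r with h | h
        · have : t + 1 ∉ I := fun hh => hsp ⟨h, hh⟩
          have := hgood.hP2 t this hL1 hL2
          rw [hP] at this; exact Bool.noConfusion this
        · have := hgood.Lhigh t h
          rw [hL1] at this; exact Bool.noConfusion this
    · obtain ⟨e1, e2⟩ := hgood.hP1 t hP
      rw [e1, e2]; rfl

include hnc in
lemma encode_mem (hD : Dcond r I c k n) (hr : 3 ≤ r) (hcc : ∀ i ∈ I, 1 ≤ c i) :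
    ∀ t : Fin r, encodeX r I n t ∈ Aset I t.val := by
  intro t
  have hgood := LPgood_of hnc hcc hD hr
  rw [encodeX, Aset]
  by_cases h1 : t.val + 1 ∈ I
  · rw [if_pos h1, if_pos h1, Finset.mem_filter]
    refine ⟨Finset.mem_univ _, fun hp => ?_⟩
    exact hgood.hP1 t.val hp
  · rw [if_neg h1, if_neg h1]
    by_cases h2 : t.val = 0 ∨ t.val ∈ I
    · rw [if_pos h2, if_pos h2]; exact Finset.mem_singleton_self _
    · rw [if_neg h2, if_neg h2, Finset.mem_filter]
      exact ⟨Finset.mem_univ _, rfl⟩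

include hnc in
lemma decode_encode (hD : Dcond r I c k n) (hr : 3 ≤ r) (hcc : ∀ i ∈ I, 1 ≤ c i) :
    decodeN r I c (encodeX r I n) = n := by
  rw [decodeN, LnOf_eq_LofX_encode hnc hD, PnOf_eq_PofX_encode hnc hr hD hcc]
  exact recon hnc hD

include hI hnc hc in
lemma encode_decode {x : Fin r → Bool × Bool × Bool}
    (hx : ∀ t : Fin r, x t ∈ Aset I t.val) :
    encodeX r I (decodeN r I c x) = x := by
  have hgood := goodX hI hnc hx
  have hLn : ∀ t, LnOf r (decodeN r I c x) t = LofX r I x t := by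
    intro t
    rw [LnOf, decodeN, inflow_nMat hgood t]
    rcases h : LofX r I x t with _ | _ <;> simp [b2]
  have hPn : ∀ t, PnOf r (decodeN r I c x) t = PofX r I x t := by
    intro t
    rw [PnOf, decodeN, pss_nMat hgood t]
    rcases h : PofX r I x t with _ | _ <;> simp [b2]
  funext t
  rw [encodeX]
  by_cases h1 : t.val + 1 ∈ I
  · rw [if_pos h1]
    have hmemV : LofX r I x t.val = (x t).1 := by
      have ha := hI (t.val + 1) h1
      have hb : t.val ∉ I := fun h => not_both_mem hnc ⟨h, h1⟩
      rw [LofX, if_pos (by omega), if_neg hb, xg_val t.isLt]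
    have hmemV2 : LofX r I x (t.val + 1) = (x t).2.1 := by
      have ha := hI (t.val + 1) h1
      rw [LofX, if_pos (by omega), if_pos h1]
      have : t.val + 1 - 1 = t.val := by omega
      rw [this, xg_val t.isLt]
    have hmemV3 : PofX r I x t.val = (x t).2.2 := by
      rw [PofX, if_pos ⟨t.isLt, h1⟩, xg_val t.isLt]
    rw [hLn, hLn, hPn, hmemV, hmemV2, hmemV3]
  · rw [if_neg h1]
    by_cases h2 : t.val = 0 ∨ t.val ∈ I
    · rw [if_pos h2]
      have hmem := hx t
      rw [Aset, if_neg h1, if_pos h2, Finset.mem_singleton] at hmem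
      exact hmem.symm
    · rw [if_neg h2]
      have hmem := hx t
      rw [Aset, if_neg h1, if_neg h2, Finset.mem_filter] at hmem
      have hLt : LofX r I x t.val = (x t).1 := by
        rw [LofX, if_pos (by constructor; omega; exact t.isLt), if_neg (by tauto), xg_val t.isLt]
      rw [hLn, hLt]
      exact Prod.ext_iff.mpr ⟨rfl, hmem.2.symm⟩


/-! ## Cardinalities and weight sum -/

lemma three_split (g : ℕ → ℕ) :
    ∑ t ∈ range r, g t =
      (∑ t ∈ (range r).filter (fun t => t + 1 ∈ I), g t)
      + ((∑ t ∈ (range r).filter (fun t => ¬(t + 1 ∈ I) ∧ (t = 0 ∨ t ∈ I)), g t)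
      + (∑ t ∈ (range r).filter (fun t => ¬(t + 1 ∈ I) ∧ ¬(t = 0 ∨ t ∈ I)), g t)) := by
  rw [← Finset.sum_filter_add_sum_filter_not (range r) (fun t => t + 1 ∈ I) g]
  congr 1
  rw [← Finset.sum_filter_add_sum_filter_not ((range r).filter (fun t => ¬(t + 1 ∈ I)))
    (fun t => t = 0 ∨ t ∈ I) g, Finset.filter_filter, Finset.filter_filter]

include hI in
lemma card_V : ((range r).filter (fun t => t + 1 ∈ I)).card = I.card := by
  apply Finset.card_nbij (fun t => t + 1)
  · intro t ht
    rw [Finset.mem_coe, Finset.mem_filter] at ht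
    exact ht.2
  · intro a _ b _ hab
    simpa using hab
  · intro i hi
    rw [Finset.mem_coe] at hi
    have h1 := hI i hi
    refine ⟨i - 1, ?_, show i - 1 + 1 = i by omega⟩
    rw [Finset.mem_coe, Finset.mem_filter, Finset.mem_range]
    have h2 : i - 1 + 1 = i := by omega
    rw [h2]
    exact ⟨by omega, hi⟩

include hI hnc in
lemma U_filter_eq (hr : 3 ≤ r) :
    (range r).filter (fun t => ¬(t + 1 ∈ I) ∧ (t = 0 ∨ t ∈ I)) = insert 0 I := by
  ext t
  simp only [Finset.mem_filter, Finset.mem_range, Finset.mem_insert]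
  constructor
  · rintro ⟨h1, h2, h3⟩; exact h3
  · rintro (rfl | hmem)
    · refine ⟨by omega, fun h => ?_, Or.inl rfl⟩
      have := hI 1 h; omega
    · have h1 := hI t hmem
      exact ⟨by omega, fun h => not_both_mem hnc ⟨hmem, h⟩, Or.inr hmem⟩

include hI hnc in
lemma card_U (hr : 3 ≤ r) :
    ((range r).filter (fun t => ¬(t + 1 ∈ I) ∧ (t = 0 ∨ t ∈ I))).card = I.card + 1 := by
  rw [U_filter_eq hI hnc hr,
    Finset.card_insert_of_notMem (fun h => by have := hI 0 h; omega)]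

include hI hnc in
lemma cards_split (hr : 3 ≤ r) :
    r = ((range r).filter (fun t => t + 1 ∈ I)).card
      + (((range r).filter (fun t => ¬(t + 1 ∈ I) ∧ (t = 0 ∨ t ∈ I))).card
      + ((range r).filter (fun t => ¬(t + 1 ∈ I) ∧ ¬(t = 0 ∨ t ∈ I))).card) := by
  have h := three_split (I := I) (r := r) (fun _ => 1)
  simp only [Finset.sum_const, smul_eq_mul, mul_one, Finset.card_range] at h
  exact h

include hI hnc in
lemma card_B (hr : 3 ≤ r) :
    ((range r).filter (fun t => ¬(t + 1 ∈ I) ∧ ¬(t = 0 ∨ t ∈ I))).card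
      = r - 1 - 2 * I.card := by
  have h1 := cards_split hI hnc hr
  rw [card_V hI, card_U hI hnc hr] at h1
  omega

include hI hnc in
lemma weight_sum (hr : 3 ≤ r) (x : Fin r → Bool × Bool × Bool) :
    Wgt r I x + (∑ t ∈ range r, b2 (LofX r I x t)) + 1 = r := by
  have hsum : Wgt r I x + (∑ t ∈ range r, b2 (LofX r I x t))
      = ∑ t ∈ range r, (wt I t (xg r x t) + b2 (LofX r I x t)) := by
    rw [Wgt, ← Finset.sum_add_distrib]
  have hspl := three_split (I := I) (r := r) (fun t => wt I t (xg r x t) + b2 (LofX r I x t))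
  -- V terms
  have hVterm : ∀ t ∈ (range r).filter (fun t => t + 1 ∈ I),
      (wt I t (xg r x t) + b2 (LofX r I x t)) + b2 ((xg r x t).2.1) = 2 := by
    intro t ht
    rw [Finset.mem_filter, Finset.mem_range] at ht
    have h1 := hI (t + 1) ht.2
    have h2 : t ∉ I := fun h => not_both_mem hnc ⟨h, ht.2⟩
    have hL : LofX r I x t = (xg r x t).1 := by
      rw [LofX, if_pos (by omega), if_neg h2]
    rw [hL, wt, if_pos ht.2]
    have := b2_le_one ((xg r x t).1); have := b2_le_one ((xg r x t).2.1)
    omega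
  have hVsum : (∑ t ∈ (range r).filter (fun t => t + 1 ∈ I),
        (wt I t (xg r x t) + b2 (LofX r I x t)))
      + (∑ t ∈ (range r).filter (fun t => t + 1 ∈ I), b2 ((xg r x t).2.1))
      = 2 * ((range r).filter (fun t => t + 1 ∈ I)).card := by
    rw [← Finset.sum_add_distrib, Finset.sum_congr rfl hVterm, Finset.sum_const, smul_eq_mul,
      mul_comm]
  -- U terms
  have hUterm : ∀ t ∈ (range r).filter (fun t => ¬(t + 1 ∈ I) ∧ (t = 0 ∨ t ∈ I)),
      (wt I t (xg r x t) + b2 (LofX r I x t))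
        = if t ∈ I then b2 ((xg r x (t - 1)).2.1) else 0 := by
    intro t ht
    rw [Finset.mem_filter, Finset.mem_range] at ht
    obtain ⟨h1, h2, h3⟩ := ht
    rw [wt, if_neg h2, if_pos h3]
    rcases h3 with rfl | hmem
    · have h0 : (0 : ℕ) ∉ I := fun h => by have := hI 0 h; omega
      rw [if_neg h0, LofX]
      simp
    · have h4 := hI t hmem
      rw [if_pos hmem, LofX, if_pos (by omega), if_pos hmem]
      simp
  have hUsum : (∑ t ∈ (range r).filter (fun t => ¬(t + 1 ∈ I) ∧ (t = 0 ∨ t ∈ I)),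
        (wt I t (xg r x t) + b2 (LofX r I x t)))
      = ∑ t ∈ (range r).filter (fun t => t + 1 ∈ I), b2 ((xg r x t).2.1) := by
    rw [Finset.sum_congr rfl hUterm, Finset.sum_ite, Finset.sum_const_zero, add_zero,
      Finset.filter_filter]
    refine Finset.sum_nbij' (fun t => t - 1) (fun t => t + 1) ?_ ?_ ?_ ?_ ?_
    · intro t ht
      simp only [Finset.mem_filter, Finset.mem_range] at ht ⊢
      obtain ⟨h1, ⟨h2, h3⟩, h4⟩ := ht
      have h5 := hI t h4
      constructor
      · omega
      · have : t - 1 + 1 = t := by omega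
        rw [this]; exact h4
    · intro t ht
      simp only [Finset.mem_filter, Finset.mem_range] at ht ⊢
      obtain ⟨h1, h2⟩ := ht
      have h5 := hI (t + 1) h2
      refine ⟨by omega, ⟨fun h => not_both_mem hnc ⟨h2, h⟩, Or.inr h2⟩, h2⟩
    · intro t ht
      simp only [Finset.mem_filter, Finset.mem_range] at ht
      have h5 := hI t ht.2.2
      omega
    · intro t ht
      omega
    · intro t ht; rfl
  -- B terms
  have hBterm : ∀ t ∈ (range r).filter (fun t => ¬(t + 1 ∈ I) ∧ ¬(t = 0 ∨ t ∈ I)),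
      (wt I t (xg r x t) + b2 (LofX r I x t)) = 1 := by
    intro t ht
    rw [Finset.mem_filter, Finset.mem_range] at ht
    obtain ⟨h1, h2, h3⟩ := ht
    push_neg at h3
    rw [wt, if_neg h2, if_neg (by tauto), LofX, if_pos (by omega), if_neg h3.2]
    have := b2_le_one ((xg r x t).1)
    omega
  have hBsum : (∑ t ∈ (range r).filter (fun t => ¬(t + 1 ∈ I) ∧ ¬(t = 0 ∨ t ∈ I)),
        (wt I t (xg r x t) + b2 (LofX r I x t)))
      = ((range r).filter (fun t => ¬(t + 1 ∈ I) ∧ ¬(t = 0 ∨ t ∈ I))).card := by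
    rw [Finset.sum_congr rfl hBterm, Finset.sum_const, smul_eq_mul, mul_one]
  have hcards := cards_split hI hnc hr
  rw [card_V hI, card_U hI hnc hr] at hcards
  rw [card_V hI] at hVsum
  omega


/-! ## Polynomial identities -/

lemma Spoly_V {t : ℕ} (h : t + 1 ∈ I) :
    ∑ v ∈ Aset I t, (X : ℤ[X]) ^ wt I t v = 2 + 2 * X + X ^ 2 := by
  rw [Aset, if_pos h]
  simp only [wt, if_pos h]
  rw [Finset.sum_filter]
  simp only [Fintype.sum_prod_type, Fintype.sum_bool, b2]
  norm_num
  ring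

lemma Spoly_U {t : ℕ} (h1 : t + 1 ∉ I) (h2 : t = 0 ∨ t ∈ I) :
    ∑ v ∈ Aset I t, (X : ℤ[X]) ^ wt I t v = 1 := by
  rw [Aset, if_neg h1, if_pos h2]
  simp only [wt, if_neg h1, if_pos h2]
  rw [Finset.sum_singleton, pow_zero]

lemma Spoly_B {t : ℕ} (h1 : t + 1 ∉ I) (h2 : ¬(t = 0 ∨ t ∈ I)) :
    ∑ v ∈ Aset I t, (X : ℤ[X]) ^ wt I t v = 1 + X := by
  rw [Aset, if_neg h1, if_neg h2]
  simp only [wt, if_neg h1, if_neg h2]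
  rw [Finset.sum_filter]
  simp only [Fintype.sum_prod_type, Fintype.sum_bool, b2]
  norm_num

include hI hnc in
lemma prod_Spoly (hr : 3 ≤ r) :
    ∏ t : Fin r, (∑ v ∈ Aset I t.val, (X : ℤ[X]) ^ wt I t.val v)
      = (1 + X) ^ (r - 1 - 2 * I.card) * (2 + 2 * X + X ^ 2) ^ I.card := by
  rw [Fin.prod_univ_eq_prod_range (fun t => ∑ v ∈ Aset I t, (X : ℤ[X]) ^ wt I t v) r]
  have hpt : ∀ t ∈ range r, (∑ v ∈ Aset I t, (X : ℤ[X]) ^ wt I t v)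
      = if t + 1 ∈ I then (2 + 2 * X + X ^ 2)
        else if t = 0 ∨ t ∈ I then 1 else (1 + X) := by
    intro t _
    by_cases h1 : t + 1 ∈ I
    · rw [if_pos h1, Spoly_V h1]
    · rw [if_neg h1]
      by_cases h2 : t = 0 ∨ t ∈ I
      · rw [if_pos h2, Spoly_U h1 h2]
      · rw [if_neg h2, Spoly_B h1 h2]
  rw [Finset.prod_congr rfl hpt, Finset.prod_ite, Finset.prod_const, Finset.prod_ite,
    Finset.prod_const, Finset.prod_const, Finset.filter_filter, Finset.filter_filter,
    card_V hI, card_B hI hnc hr, one_pow, one_mul, mul_comm]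

lemma coeff_sum_X_pow {α : Type*} [DecidableEq α] (s : Finset α) (e : α → ℕ) (k : ℕ) :
    (∑ a ∈ s, (X : ℤ[X]) ^ e a).coeff k = ((s.filter (fun a => e a = k)).card : ℤ) := by
  rw [Polynomial.finset_sum_coeff]
  simp only [Polynomial.coeff_X_pow]
  rw [Finset.sum_boole]
  congr 1
  exact congrArg Finset.card (Finset.filter_congr (fun a _ => by simp [eq_comm]))

include hI hnc in
lemma poly_coeff_eq (hr : 3 ≤ r) (m k : ℕ) :
    (((X : ℤ[X]) ^ (m + 1) * (1 + X) ^ (r - 1 - 2 * I.card)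
        * (2 + 2 * X + X ^ 2) ^ I.card).coeff k)
      = (((Fintype.piFinset (fun t : Fin r => Aset I t.val)).filter
          (fun x => m + 1 + Wgt r I x = k)).card : ℤ) := by
  rw [mul_assoc, ← prod_Spoly hI hnc hr, Finset.prod_univ_sum, Finset.mul_sum]
  have hterm : ∀ x ∈ Fintype.piFinset (fun t : Fin r => Aset I t.val),
      (X : ℤ[X]) ^ (m + 1) * ∏ t : Fin r, (X : ℤ[X]) ^ wt I t.val (x t)
        = (X : ℤ[X]) ^ (m + 1 + Wgt r I x) := by
    intro x _
    rw [Finset.prod_pow_eq_pow_sum, ← pow_add]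
    congr 1
    have hW : ∑ t : Fin r, wt I t.val (x t) = Wgt r I x := by
      rw [Wgt, ← Fin.sum_univ_eq_sum_range (fun t => wt I t (xg r x t)) r]
      apply Finset.sum_congr rfl
      intro t _
      rw [xg_val t.isLt, Fin.eta]
    rw [hW]
  rw [Finset.sum_congr rfl hterm, coeff_sum_X_pow]

/-! ## Counting decompositions -/

include hI hnc hc in
lemma card_D (hr : 3 ≤ r) (k : ℕ) :
    Nat.card {n : ℕ → ℕ → ℕ // Dcond r I c k n}
      = ((Fintype.piFinset (fun t : Fin r => Aset I t.val)).filter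
          (fun x => (∑ i ∈ I, c i) + 1 + Wgt r I x = k)).card := by
  have hxi := sum_xi (r := r) (c := c) hI
  have e : {n : ℕ → ℕ → ℕ // Dcond r I c k n}
      ≃ {x : Fin r → Bool × Bool × Bool //
          x ∈ (Fintype.piFinset (fun t : Fin r => Aset I t.val)).filter
            (fun x => (∑ i ∈ I, c i) + 1 + Wgt r I x = k)} := by
    refine ⟨fun n => ⟨encodeX r I n.1, ?_⟩, fun x => ⟨decodeN r I c x.1, ?_⟩, ?_, ?_⟩
    · obtain ⟨n, hD⟩ := n
      dsimp only
      rw [Finset.mem_filter]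
      constructor
      · rw [Fintype.mem_piFinset]
        exact encode_mem hnc hD hr hc
      · have h1 := total_eq (I := I) (c := c) hD.1 hD.2.1
        have h2 : ∑ t ∈ range r, inflow r n t = ∑ t ∈ range r, b2 (LnOf r n t) :=
          Finset.sum_congr rfl fun t _ => (b2_LnOf hnc hD t).symm
        have h3 := weight_sum hI hnc hr (encodeX r I n)
        rw [LnOf_eq_LofX_encode hnc hD] at h3
        have h5 := hD.2.2
        omega
    · obtain ⟨x, hx⟩ := x
      rw [Finset.mem_filter] at hx
      have hxA : ∀ t : Fin r, x t ∈ Aset I t.val := Fintype.mem_piFinset.mp hx.1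
      have hgood := goodX hI hnc hxA
      dsimp only
      refine ⟨nMat_supp, cov_nMat hc hgood, ?_⟩
      have h1 := total_nMat hc hgood
      have h3 := weight_sum hI hnc hr x
      have h4 := hx.2
      rw [decodeN]
      omega
    · intro n
      exact Subtype.ext (decode_encode hnc n.2 hr hc)
    · intro x
      have hxA : ∀ t : Fin r, x.1 t ∈ Aset I t.val :=
        Fintype.mem_piFinset.mp (Finset.mem_filter.mp x.2).1
      exact Subtype.ext (encode_decode hI hnc hc hxA)
  rw [Nat.card_congr e, Nat.card_eq_finsetCard]


/-! ## Finsupp translation -/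

lemma isPosRootA_iff {v : Fin r → ℕ} :
    isPosRootA r v ↔ ∃ a b : ℕ, a ≤ b ∧ b < r ∧ v = rootv r a b := by
  constructor
  · rintro ⟨i, j, h1, h2, h3, rfl⟩
    refine ⟨i - 1, j - 1, by omega, by omega, ?_⟩
    funext t
    rw [rootv]
    have he : (i ≤ t.val + 1 ∧ t.val + 1 ≤ j) ↔ (i - 1 ≤ t.val ∧ t.val ≤ j - 1) := by omega
    rw [if_congr he rfl rfl]
  · rintro ⟨a, b, h1, h2, rfl⟩
    refine ⟨a + 1, b + 1, by omega, by omega, by omega, ?_⟩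
    funext t
    rw [rootv]
    have he : (a + 1 ≤ t.val + 1 ∧ t.val + 1 ≤ b + 1) ↔ (a ≤ t.val ∧ t.val ≤ b) := by omega
    rw [if_congr he rfl rfl]

lemma rootv_inj {a b a' b' : ℕ} (h1 : a ≤ b) (h2 : b < r) (h3 : a' ≤ b') (h4 : b' < r)
    (h : rootv r a b = rootv r a' b') : a = a' ∧ b = b' := by
  have main : ∀ u, u < r → ((a ≤ u ∧ u ≤ b) ↔ (a' ≤ u ∧ u ≤ b')) := by
    intro u hu
    have he := congrFun h ⟨u, hu⟩
    simp only [rootv] at he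
    constructor
    · intro hcnd; by_contra hc'; rw [if_pos hcnd, if_neg hc'] at he; exact one_ne_zero he
    · intro hcnd; by_contra hc'; rw [if_neg hc', if_pos hcnd] at he; exact zero_ne_one he
  have k1 := (main a (by omega)).1 ⟨le_rfl, h1⟩
  have k2 := (main b (by omega)).1 ⟨h1, le_rfl⟩
  have k3 := (main a' (by omega)).2 ⟨le_rfl, h3⟩
  have k4 := (main b' (by omega)).2 ⟨h3, le_rfl⟩
  omega

lemma toFs_apply {n : ℕ → ℕ → ℕ} (hsupp : ∀ a b, ¬(a ≤ b ∧ b < r) → n a b = 0)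
    {a b : ℕ} (ha : a ≤ b) (hb : b < r) : toFs r n (rootv r a b) = n a b := by
  rw [toFs, Finsupp.finset_sum_apply]
  rw [Finset.sum_eq_single_of_mem (a, b) (Finset.mk_mem_product
    (by rw [Finset.mem_range]; omega) (by rw [Finset.mem_range]; omega))]
  · rw [Finsupp.single_eq_same]
  · rintro ⟨a', b'⟩ hp hne
    rw [Finset.mem_product, Finset.mem_range, Finset.mem_range] at hp
    by_cases hv : a' ≤ b'
    · have hne2 : rootv r a' b' ≠ rootv r a b := fun hh => by
        obtain ⟨e1, e2⟩ := rootv_inj hv hp.2 ha hb hh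
        exact hne (by rw [Prod.mk.injEq]; exact ⟨e1, e2⟩)
      rw [Finsupp.single_eq_of_ne' hne2]
    · rw [hsupp a' b' (by omega), Finsupp.single_zero, Finsupp.coe_zero, Pi.zero_apply]

lemma toFs_support_char {n : ℕ → ℕ → ℕ} (hsupp : ∀ a b, ¬(a ≤ b ∧ b < r) → n a b = 0)
    {v : Fin r → ℕ} (hv : toFs r n v ≠ 0) :
    ∃ a b, a ≤ b ∧ b < r ∧ v = rootv r a b ∧ n a b ≠ 0 := by
  rw [toFs, Finsupp.finset_sum_apply] at hv
  obtain ⟨p, hp, hne⟩ := Finset.exists_ne_zero_of_sum_ne_zero hv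
  rw [Finset.mem_product] at hp
  rw [Finsupp.single_apply] at hne
  by_cases h : rootv r p.1 p.2 = v
  · have hnz : n p.1 p.2 ≠ 0 := by
      intro hz
      rw [hz] at hne
      simp at hne
    have hle : p.1 ≤ p.2 := by
      by_contra hcon
      exact hnz (hsupp _ _ (by omega))
    exact ⟨p.1, p.2, hle, Finset.mem_range.mp hp.2, h.symm, hnz⟩
  · rw [if_neg h] at hne; exact absurd rfl hne

lemma toFs_sum_count (n : ℕ → ℕ → ℕ) : (toFs r n).sum (fun _ k => k) = total r n := by
  rw [toFs, ← Finsupp.sum_finsetSum_index (fun _ => rfl) (fun _ _ _ => rfl)]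
  rw [total, ← Finset.sum_product']
  apply Finset.sum_congr rfl
  intro p _
  rw [Finsupp.sum_single_index rfl]

lemma toFs_sum_weight (n : ℕ → ℕ → ℕ) :
    (toFs r n).sum (fun v k => k • v) = fun t : Fin r => cov r n t.val := by
  rw [toFs, ← Finsupp.sum_finsetSum_index (fun i => zero_smul ℕ i) (fun i x y => add_smul x y i)]
  funext t
  rw [Finset.sum_apply]
  have hterm : ∀ p ∈ range r ×ˢ range r,
      ((Finsupp.single (rootv r p.1 p.2) (n p.1 p.2)).sum (fun v k => k • v)) t
        = if p.1 ≤ t.val ∧ t.val ≤ p.2 then n p.1 p.2 else 0 := by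
    intro p _
    rw [Finsupp.sum_single_index (h := fun v k => k • v) (zero_smul ℕ (rootv r p.1 p.2)), Pi.smul_apply, smul_eq_mul, rootv]
    split
    · rw [mul_one]
    · rw [mul_zero]
  rw [Finset.sum_congr rfl hterm, Finset.sum_product' (s := range r) (t := range r)
    (f := fun a b => if a ≤ (t : ℕ) ∧ (t : ℕ) ≤ b then n a b else 0)]
  rw [cov]
  have hrow : ∀ a ∈ range r, (∑ b ∈ range r, if a ≤ t.val ∧ t.val ≤ b then n a b else 0)
      = if a ≤ t.val then ∑ b ∈ Ico t.val r, n a b else 0 := by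
    intro a _
    by_cases ha : a ≤ t.val
    · rw [if_pos ha]
      have hc : ∀ b ∈ range r, (if a ≤ t.val ∧ t.val ≤ b then n a b else 0)
          = if t.val ≤ b then n a b else 0 := by
        intro b _; rw [if_congr (and_iff_right ha) rfl rfl]
      rw [Finset.sum_congr rfl hc, ← Finset.sum_filter]
      apply Finset.sum_congr _ (fun _ _ => rfl)
      ext b
      simp only [Finset.mem_filter, Finset.mem_range, Finset.mem_Ico]
      omega
    · rw [if_neg ha]
      apply Finset.sum_eq_zero
      intro b _
      rw [if_neg (by tauto)]
  rw [Finset.sum_congr rfl hrow, ← Finset.sum_filter]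
  apply Finset.sum_congr _ (fun _ _ => rfl)
  ext a
  simp only [Finset.mem_filter, Finset.mem_range]
  have := t.isLt
  omega

lemma toFs_psi (m : (Fin r → ℕ) →₀ ℕ) (hm : ∀ v ∈ m.support, isPosRootA r v) :
    toFs r (fun a b => if a ≤ b ∧ b < r then m (rootv r a b) else 0) = m := by
  set ψ : ℕ → ℕ → ℕ := fun a b => if a ≤ b ∧ b < r then m (rootv r a b) else 0 with hψ
  have hsupp : ∀ a b, ¬(a ≤ b ∧ b < r) → ψ a b = 0 := by
    intro a b h; rw [hψ]; simp only []; rw [if_neg h]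
  ext v
  by_cases hv0 : m v = 0
  · rw [hv0]
    by_contra hne
    obtain ⟨a, b, hab, hbr, rfl, hnz⟩ := toFs_support_char hsupp hne
    apply hnz
    rw [hψ]; simp only []; rw [if_pos ⟨hab, hbr⟩, hv0]
  · obtain ⟨a, b, hab, hbr, rfl⟩ :=
      isPosRootA_iff.mp (hm v (Finsupp.mem_support_iff.mpr hv0))
    rw [toFs_apply hsupp hab hbr, hψ]
    simp only []
    rw [if_pos ⟨hab, hbr⟩]

include hI hnc hc in
lemma NA_eq (hr : 3 ≤ r) (k : ℕ) (ξ : Fin r → ℕ)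
    (hξ : ξ = fun t : Fin r => xiN I c t.val) :
    NA r k ξ = ((Fintype.piFinset (fun t : Fin r => Aset I t.val)).filter
          (fun x => (∑ i ∈ I, c i) + 1 + Wgt r I x = k)).card := by
  have step1 : NA r k ξ = Nat.card {m : (Fin r → ℕ) →₀ ℕ //
      (∀ v ∈ m.support, isPosRootA r v) ∧ (m.sum fun _ n => n) = k
        ∧ (m.sum fun v n => n • v) = ξ} := by
    rw [NA, ← Nat.card_coe_set_eq]
    rfl
  rw [step1, ← card_D hI hnc hc hr k]
  apply Nat.card_congr
  refine ⟨fun m => ⟨fun a b => if a ≤ b ∧ b < r then m.1 (rootv r a b) else 0, ?_⟩,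
          fun n => ⟨toFs r n.1, ?_, ?_, ?_⟩, ?_, ?_⟩
  · -- Dcond of ψ
    obtain ⟨m, hm1, hm2, hm3⟩ := m
    dsimp only
    have hkey := toFs_psi m hm1
    have hsupp : ∀ a b, ¬(a ≤ b ∧ b < r) →
        (if a ≤ b ∧ b < r then m (rootv r a b) else 0) = 0 := by
      intro a b h; rw [if_neg h]
    refine ⟨hsupp, ?_, ?_⟩
    · intro t ht
      have hw := toFs_sum_weight (r := r)
        (fun a b => if a ≤ b ∧ b < r then m (rootv r a b) else 0)
      rw [hkey, hm3, hξ] at hw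
      have := congrFun hw ⟨t, ht⟩
      exact this.symm
    · have hcnt := toFs_sum_count (r := r)
        (fun a b => if a ≤ b ∧ b < r then m (rootv r a b) else 0)
      rw [hkey, hm2] at hcnt
      exact hcnt.symm
  · -- support of toFs
    intro v hv
    obtain ⟨a, b, hab, hbr, rfl, _⟩ :=
      toFs_support_char n.2.1 (Finsupp.mem_support_iff.mp hv)
    exact isPosRootA_iff.mpr ⟨a, b, hab, hbr, rfl⟩
  · rw [toFs_sum_count]
    exact n.2.2.2
  · rw [toFs_sum_weight, hξ]
    funext t
    exact n.2.2.1 t.val t.isLt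
  · -- left inverse
    intro m
    exact Subtype.ext (toFs_psi m.1 m.2.1)
  · -- right inverse
    intro n
    apply Subtype.ext
    funext a b
    dsimp only
    by_cases h : a ≤ b ∧ b < r
    · rw [if_pos h, toFs_apply n.2.1 h.1 h.2]
    · rw [if_neg h, (n.2.1 a b h).symm]

end Main
end QA

/-- Proposition 3.2: for `ξ = Σ α_i + Σ_j c_{i_j} α_{i_j}` with `I = {i_1 < ⋯ < i_ℓ}`
nonconsecutive, `1 < i_1`, `i_ℓ < r`, and positive coefficients `c`,
`℘_q(ξ) = q^{m+1} (1+q)^{r−1−2ℓ} (2+2q+q²)^ℓ` where `m = Σ_j c_{i_j}`. -/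
theorem qAnalog_nonconsecutive_multiplicity_typeA (r ℓ : ℕ) (hr : 3 ≤ r)
    (I : Finset ℕ) (hcard : I.card = ℓ)
    (hI : ∀ i ∈ I, 1 < i ∧ i < r)
    (hnc : ∀ i ∈ I, ∀ j ∈ I, i < j → i + 2 ≤ j)
    (c : ℕ → ℕ) (hc : ∀ i ∈ I, 1 ≤ c i)
    (m : ℕ) (hm : m = ∑ i ∈ I, c i)
    (ξ : Fin r → ℕ)
    (hξ : ξ = fun t => if t.val + 1 ∈ I then 1 + c (t.val + 1) else 1) :
    ∀ k : ℕ, (NA r k ξ : ℤ) =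
      ((X : ℤ[X]) ^ (m + 1) * (1 + X) ^ (r - 1 - 2 * ℓ) *
        (2 + 2 * X + X ^ 2) ^ ℓ).coeff k := by
  intro k
  subst hcard
  subst hm
  have hξ' : ξ = fun t : Fin r => QA.xiN I c t.val := by rw [hξ]; rfl
  rw [QA.NA_eq hI hnc hc hr k ξ hξ']
  exact (QA.poly_coeff_eq hI hnc hr (∑ i ∈ I, c i) k).symm
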